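/- For θ ∈ ℝ let D_θ = cosh(θ/2) • I₄ + sinh(θ/2) • (Γ_p Γ_q) and D_θ' = cosh(θ/2) • I₄ − sinh(θ/2) • (Γ_p Γ_q). Then (Γ_p Γ_q)² = I₄, D_θ D_θ' = I₄, D_θ Γ_c D_θ' = Γ_c for every c ∈ {t, x, y, z}, and for all real p, q: D_θ (p•Γ_p + q•Γ_q) D_θ' = (p cosh θ + q sinh θ)•Γ_p + (q cosh θ + p sinh θ)•Γ_q. In particular the transformed coefficients satisfy p' + q' = e^θ (p + q) (the action is a dilation). -/

import Mathlib

open Quaternion Matrix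

/-- The split quaternions, with K = i, L = j, KL = k. -/
notation "ℍ'" => QuaternionAlgebra ℝ (-1) 0 1

/-- A = ℍ' ⊗_ℝ ℂ, realized as the quaternion algebra over ℂ with i² = −1, j² = 1. -/
abbrev SplitQC := QuaternionAlgebra ℂ (-1) 0 1

namespace SplitQC
/-- K, the split-quaternion unit with K² = −1 -/
def K : SplitQC := ⟨0, 1, 0, 0⟩
/-- L, the split-quaternion unit with L² = 1 -/
def L : SplitQC := ⟨0, 0, 1, 0⟩
/-- KL, with (KL)² = 1 -/
def KL : SplitQC := ⟨0, 0, 0, 1⟩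
/-- ℓ = 1 ⊗ i, the complex unit -/
def ll : SplitQC := ⟨Complex.I, 0, 0, 0⟩
end SplitQC

open SplitQC

/-- Index set {x, y, z, t, q, p} for the gamma matrices. -/
inductive Idx | x | y | z | t | q | p
deriving DecidableEq

/-- The gamma matrices generating Cl(4,2). -/
def Γ : Idx → Matrix (Fin 4) (Fin 4) SplitQC
| Idx.x => !![0,0,0,1; 0,0,1,0; 0,1,0,0; 1,0,0,0]
| Idx.y => !![0,0,0,-ll; 0,0,ll,0; 0,-ll,0,0; ll,0,0,0]
| Idx.z => !![0,0,1,0; 0,0,0,-1; 1,0,0,0; 0,-1,0,0]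
| Idx.t => !![0,0,L,0; 0,0,0,L; -L,0,0,0; 0,-L,0,0]
| Idx.q => !![0,0,K,0; 0,0,0,K; -K,0,0,0; 0,-K,0,0]
| Idx.p => !![0,0,KL,0; 0,0,0,KL; -KL,0,0,0; 0,-KL,0,0]

/-- The metric of signature (4,2). -/
def g : Idx → Idx → ℝ
| Idx.x, Idx.x => 1 | Idx.y, Idx.y => 1 | Idx.z, Idx.z => 1 | Idx.q, Idx.q => 1
| Idx.t, Idx.t => -1 | Idx.p, Idx.p => -1
| _, _ => 0


set_option maxHeartbeats 1000000

section units
open QuaternionAlgebra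
lemma LL : L * L = 1 := by ext <;> simp [L, QuaternionAlgebra.re_mul, QuaternionAlgebra.imI_mul, QuaternionAlgebra.imJ_mul,
    QuaternionAlgebra.imK_mul]
lemma KL_K : KL * K = L := by ext <;> simp [K, L, KL, QuaternionAlgebra.re_mul, QuaternionAlgebra.imI_mul, QuaternionAlgebra.imJ_mul,
    QuaternionAlgebra.imK_mul]
lemma L_K : L * K = -KL := by ext <;> simp [K, L, KL, QuaternionAlgebra.re_mul, QuaternionAlgebra.imI_mul, QuaternionAlgebra.imJ_mul,
    QuaternionAlgebra.imK_mul]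
lemma K_L : K * L = KL := by ext <;> simp [K, L, KL, QuaternionAlgebra.re_mul, QuaternionAlgebra.imI_mul, QuaternionAlgebra.imJ_mul,
    QuaternionAlgebra.imK_mul]
lemma L_KL : L * KL = -K := by ext <;> simp [K, L, KL, QuaternionAlgebra.re_mul, QuaternionAlgebra.imI_mul, QuaternionAlgebra.imJ_mul,
    QuaternionAlgebra.imK_mul]
lemma KL_L : KL * L = K := by ext <;> simp [K, L, KL, QuaternionAlgebra.re_mul, QuaternionAlgebra.imI_mul, QuaternionAlgebra.imJ_mul,
    QuaternionAlgebra.imK_mul]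
lemma ll_L : ll * L = L * ll := by ext <;> simp [ll, L, QuaternionAlgebra.re_mul, QuaternionAlgebra.imI_mul, QuaternionAlgebra.imJ_mul,
    QuaternionAlgebra.imK_mul]
end units

lemma Jeq : Γ Idx.p * Γ Idx.q = Matrix.diagonal (fun _ => -L) := by
  apply Matrix.ext; intro i j
  fin_cases i <;> fin_cases j <;>
    simp [Γ, Matrix.mul_apply, Fin.sum_univ_four, KL_K, mul_neg, neg_mul, neg_neg,
      Matrix.vecHead, Matrix.vecTail, Matrix.diagonal]

lemma Jsq : (Γ Idx.p * Γ Idx.q) * (Γ Idx.p * Γ Idx.q) = 1 := by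
  rw [Jeq, Matrix.diagonal_mul_diagonal]
  simp [neg_mul, mul_neg, LL, ← Matrix.diagonal_one]

lemma Jcomm : ∀ c : Idx, c = Idx.t ∨ c = Idx.x ∨ c = Idx.y ∨ c = Idx.z →
    (Γ Idx.p * Γ Idx.q) * Γ c = Γ c * (Γ Idx.p * Γ Idx.q) := by
  rintro c (rfl|rfl|rfl|rfl) <;>
  · rw [Jeq]; apply Matrix.ext; intro i j
    rw [Matrix.diagonal_mul, Matrix.mul_diagonal]
    fin_cases i <;> fin_cases j <;>
      simp [Γ, mul_neg, neg_mul, neg_neg, ll_L, Matrix.vecHead, Matrix.vecTail]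

lemma JΓp : (Γ Idx.p * Γ Idx.q) * Γ Idx.p = Γ Idx.q := by
  rw [Jeq]; apply Matrix.ext; intro i j
  rw [Matrix.diagonal_mul]
  fin_cases i <;> fin_cases j <;>
    simp [Γ, mul_neg, neg_mul, neg_neg, L_KL, Matrix.vecHead, Matrix.vecTail]

lemma ΓpJ : Γ Idx.p * (Γ Idx.p * Γ Idx.q) = -Γ Idx.q := by
  rw [Jeq]; apply Matrix.ext; intro i j
  rw [Matrix.mul_diagonal]
  fin_cases i <;> fin_cases j <;>
    simp [Γ, mul_neg, neg_mul, neg_neg, KL_L, Matrix.vecHead, Matrix.vecTail]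

lemma JΓq : (Γ Idx.p * Γ Idx.q) * Γ Idx.q = Γ Idx.p := by
  rw [Jeq]; apply Matrix.ext; intro i j
  rw [Matrix.diagonal_mul]
  fin_cases i <;> fin_cases j <;>
    simp [Γ, mul_neg, neg_mul, neg_neg, L_K, Matrix.vecHead, Matrix.vecTail]

lemma ΓqJ : Γ Idx.q * (Γ Idx.p * Γ Idx.q) = -Γ Idx.p := by
  rw [Jeq]; apply Matrix.ext; intro i j
  rw [Matrix.mul_diagonal]
  fin_cases i <;> fin_cases j <;>
    simp [Γ, mul_neg, neg_mul, neg_neg, K_L, Matrix.vecHead, Matrix.vecTail]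

section Key
variable {A : Type*} [Ring A] [Algebra ℝ A]

lemma keyA (c s : ℝ) (J : A) (hJ : J * J = 1) :
    (c • (1:A) + s • J) * (c • (1:A) - s • J) = (c^2 - s^2) • 1 := by
  simp only [mul_sub, sub_mul, mul_add, add_mul, smul_mul_assoc, mul_smul_comm,
    one_mul, mul_one, smul_smul, hJ, smul_neg, mul_neg]
  module

lemma keyB (c s : ℝ) (J X : A) (hJ : J * J = 1) (hX : J * X = X * J) :
    (c • (1:A) + s • J) * X * (c • (1:A) - s • J) = (c^2 - s^2) • X := by
  have hcomm : (c • (1:A) + s • J) * X = X * (c • (1:A) + s • J) := by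
    rw [add_mul, mul_add, smul_mul_assoc, smul_mul_assoc, mul_smul_comm, mul_smul_comm,
      one_mul, mul_one, hX]
  rw [hcomm, mul_assoc, keyA c s J hJ, mul_smul_comm, mul_one]

lemma keyC1 (c s : ℝ) (J P Q : A) (h1 : J * P = Q) (h2 : P * J = -Q) (h4 : Q * J = -P) :
    (c • (1:A) + s • J) * P * (c • (1:A) - s • J) =
      (c^2 + s^2) • P + (2*c*s) • Q := by
  have e1 : (c • (1:A) + s • J) * P = c • P + s • Q := by
    rw [add_mul, smul_mul_assoc, smul_mul_assoc, one_mul, h1]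
  rw [e1]
  simp only [mul_sub, sub_mul, mul_add, add_mul, smul_mul_assoc, mul_smul_comm,
    one_mul, mul_one, smul_smul, h2, h4, smul_neg, mul_neg]
  module

lemma keyC (c s p q : ℝ) (J P Q : A) (h1 : J * P = Q) (h2 : P * J = -Q)
    (h3 : J * Q = P) (h4 : Q * J = -P) :
    (c • (1:A) + s • J) * (p • P + q • Q) * (c • (1:A) - s • J) =
      ((c^2 + s^2) * p + 2*c*s*q) • P + ((c^2 + s^2) * q + 2*c*s*p) • Q := by
  have hP := keyC1 c s J P Q h1 h2 h4
  have hQ := keyC1 c s J Q P h3 h4 h2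
  rw [mul_add, add_mul, mul_smul_comm, mul_smul_comm, smul_mul_assoc, smul_mul_assoc,
    hP, hQ]
  module
end Key

/-- The dilation D_θ = cosh(θ/2) I + sinh(θ/2) Γ_p Γ_q: (Γ_p Γ_q)² = I, D_θ D_θ' = I,
D_θ fixes Γ_t, Γ_x, Γ_y, Γ_z, boosts the pq-plane, and rescales p + q by e^θ. -/
theorem dilation_action (θ p q : ℝ) :
    let D := Real.cosh (θ / 2) • (1 : Matrix (Fin 4) (Fin 4) SplitQC) +
      Real.sinh (θ / 2) • (Γ Idx.p * Γ Idx.q)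
    let D' := Real.cosh (θ / 2) • (1 : Matrix (Fin 4) (Fin 4) SplitQC) -
      Real.sinh (θ / 2) • (Γ Idx.p * Γ Idx.q)
    (Γ Idx.p * Γ Idx.q) ^ 2 = (1 : Matrix (Fin 4) (Fin 4) SplitQC) ∧
    D * D' = 1 ∧
    (∀ c : Idx, c = Idx.t ∨ c = Idx.x ∨ c = Idx.y ∨ c = Idx.z → D * Γ c * D' = Γ c) ∧
    (D * (p • Γ Idx.p + q • Γ Idx.q) * D' =
      (p * Real.cosh θ + q * Real.sinh θ) • Γ Idx.p +
      (q * Real.cosh θ + p * Real.sinh θ) • Γ Idx.q) ∧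
    ((p * Real.cosh θ + q * Real.sinh θ) + (q * Real.cosh θ + p * Real.sinh θ) =
      Real.exp θ * (p + q)) := by
  set c := Real.cosh (θ / 2) with hc
  set s := Real.sinh (θ / 2) with hs
  have hc2 : c^2 - s^2 = 1 := Real.cosh_sq_sub_sinh_sq (θ/2)
  have hθ : 2 * (θ/2) = θ := by ring
  have hcosh : c^2 + s^2 = Real.cosh θ := by
    have h := Real.cosh_two_mul (θ/2)
    rw [hθ] at h
    nlinarith [hc2]
  have hsinh : 2*c*s = Real.sinh θ := by
    have h := Real.sinh_two_mul (θ/2)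
    rw [hθ] at h
    rw [h]; ring
  have g1 : (Γ Idx.p * Γ Idx.q) ^ 2 = (1 : Matrix (Fin 4) (Fin 4) SplitQC) := by
    rw [sq]; exact Jsq
  have g2 : (c • (1 : Matrix (Fin 4) (Fin 4) SplitQC) + s • (Γ Idx.p * Γ Idx.q)) *
      (c • (1 : Matrix (Fin 4) (Fin 4) SplitQC) - s • (Γ Idx.p * Γ Idx.q)) = 1 := by
    rw [keyA c s _ Jsq, hc2, one_smul]
  have g3 : ∀ i : Idx, i = Idx.t ∨ i = Idx.x ∨ i = Idx.y ∨ i = Idx.z →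
      (c • (1 : Matrix (Fin 4) (Fin 4) SplitQC) + s • (Γ Idx.p * Γ Idx.q)) * Γ i *
      (c • (1 : Matrix (Fin 4) (Fin 4) SplitQC) - s • (Γ Idx.p * Γ Idx.q)) = Γ i := by
    intro i hi
    rw [keyB c s _ _ Jsq (Jcomm i hi), hc2, one_smul]
  have g4 : (c • (1 : Matrix (Fin 4) (Fin 4) SplitQC) + s • (Γ Idx.p * Γ Idx.q)) *
      (p • Γ Idx.p + q • Γ Idx.q) *
      (c • (1 : Matrix (Fin 4) (Fin 4) SplitQC) - s • (Γ Idx.p * Γ Idx.q)) =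
      (p * Real.cosh θ + q * Real.sinh θ) • Γ Idx.p +
      (q * Real.cosh θ + p * Real.sinh θ) • Γ Idx.q := by
    rw [keyC c s p q _ _ _ JΓp ΓpJ JΓq ΓqJ, hcosh, hsinh]
    module
  have g5 : (p * Real.cosh θ + q * Real.sinh θ) + (q * Real.cosh θ + p * Real.sinh θ) =
      Real.exp θ * (p + q) := by
    rw [← Real.cosh_add_sinh]; ring
  exact ⟨g1, g2, g3, g4, g5⟩
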